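/- Every subdirectly irreducible distributive rotational lattice of order n is isomorphic to the n-dimensional rotational cube 𝔅_n. In particular, every subdirectly irreducible distributive rotational lattice is simple. -/

import Mathlib

/-- A congruence of a rotational lattice `(L; ⊔, ⊓, g)`. -/
def IsCongruence {L : Type*} [Lattice L] (g : L → L) (r : L → L → Prop) : Prop :=
  Equivalence r ∧
  (∀ x₁ y₁ x₂ y₂, r x₁ y₁ → r x₂ y₂ → r (x₁ ⊔ x₂) (y₁ ⊔ y₂)) ∧
  (∀ x₁ y₁ x₂ y₂, r x₁ y₁ → r x₂ y₂ → r (x₁ ⊓ x₂) (y₁ ⊓ y₂)) ∧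
  (∀ x y, r x y → r (g x) (g y))

/-- Subdirect irreducibility: there is a smallest congruence distinct from equality. -/
def SubdirectlyIrreducible {L : Type*} [Lattice L] (g : L → L) : Prop :=
  ∃ μ : L → L → Prop, IsCongruence g μ ∧ μ ≠ (· = ·) ∧
    ∀ θ : L → L → Prop, IsCongruence g θ → θ ≠ (· = ·) → ∀ x y, μ x y → θ x y

/-- Every subdirectly irreducible distributive rotational lattice of
order `n` is isomorphic to the rotational cube `𝔅_n`, and it is simple. -/
theorem stmt_10 {L : Type*} [DistribLattice L] (g : L → L)
    (hsup : ∀ x y : L, g (x ⊔ y) = g x ⊔ g y)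
    (hinf : ∀ x y : L, g (x ⊓ y) = g x ⊓ g y)
    (hbij : Function.Bijective g)
    (n : ℕ) (hn : 0 < n) (hgn : g^[n] = id)
    (hmin : ∀ m : ℕ, 0 < m → m < n → g^[m] ≠ id)
    (hSI : SubdirectlyIrreducible g) :
    (∃ f : L → Set (ZMod n),
      Function.Bijective f ∧
      (∀ x y : L, f (x ⊔ y) = f x ∪ f y ∧ f (x ⊓ y) = f x ∩ f y) ∧
      (∀ x : L, f (g x) = (· + 1) '' f x)) ∧
    (∀ r : L → L → Prop, IsCongruence g r →
      (∀ x y, r x y ↔ x = y) ∨ (∀ x y, r x y)) := by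
  haveI : NeZero n := ⟨hn.ne'⟩
  obtain ⟨μ, hμc, hμne, hμmin⟩ := hSI
  -- a witness pair for the monolith
  have hwit : ∃ a b : L, μ a b ∧ a ≠ b := by
    by_contra h
    push_neg at h
    apply hμne
    funext x y
    exact propext ⟨fun h' => h x y h', fun h' => h' ▸ hμc.1.refl x⟩
  -- finite subdirect irreducibility : two nontrivial congruences share a nontrivial pair
  have fsi : ∀ r₁ r₂ : L → L → Prop, IsCongruence g r₁ → IsCongruence g r₂ →
      (∃ x y, r₁ x y ∧ x ≠ y) → (∃ x y, r₂ x y ∧ x ≠ y) →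
      ∃ x y, r₁ x y ∧ r₂ x y ∧ x ≠ y := by
    intro r₁ r₂ hc₁ hc₂ ⟨x₁, y₁, hr₁, hne₁⟩ ⟨x₂, y₂, hr₂, hne₂⟩
    obtain ⟨a, b, hab, hne⟩ := hwit
    have hne₁' : r₁ ≠ (· = ·) := fun h => hne₁ (by rw [h] at hr₁; exact hr₁)
    have hne₂' : r₂ ≠ (· = ·) := fun h => hne₂ (by rw [h] at hr₂; exact hr₂)
    exact ⟨a, b, hμmin r₁ hc₁ hne₁' a b hab, hμmin r₂ hc₂ hne₂' a b hab, hne⟩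
  -- monotonicity of g and iterates
  have hmono : ∀ x y : L, x ≤ y → g x ≤ g y := by
    intro x y h
    have h2 : g x ⊔ g y = g y := by rw [← hsup, sup_eq_right.mpr h]
    exact sup_eq_right.mp h2
  have hsupIt : ∀ (k : ℕ) (x y : L), g^[k] (x ⊔ y) = g^[k] x ⊔ g^[k] y := by
    intro k
    induction k with
    | zero => intro x y; simp
    | succ k ih =>
      intro x y
      simp only [Function.iterate_succ_apply]
      rw [hsup, ih]
  have hinfIt : ∀ (k : ℕ) (x y : L), g^[k] (x ⊓ y) = g^[k] x ⊓ g^[k] y := by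
    intro k
    induction k with
    | zero => intro x y; simp
    | succ k ih =>
      intro x y
      simp only [Function.iterate_succ_apply]
      rw [hinf, ih]
  -- iterates only depend on the exponent mod n
  have hIter : ∀ k : ℕ, g^[k] = g^[k % n] := by
    intro k
    conv_lhs => rw [← Nat.div_add_mod k n]
    rw [Function.iterate_add, Function.iterate_mul, hgn, Function.iterate_id]
    rfl
  have hcongr : ∀ k l : ℕ, (k : ZMod n) = (l : ZMod n) → g^[k] = g^[l] := by
    intro k l h
    rw [hIter k, hIter l, (ZMod.natCast_eq_natCast_iff k l n).mp h]
  -- every fixed point of g is a bottom or a top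
  have fixbt : ∀ e : L, g e = e → (∀ x, e ≤ x) ∨ (∀ x, x ≤ e) := by
    intro e he
    have hcm : IsCongruence g (fun x y => x ⊓ e = y ⊓ e) := by
      refine ⟨⟨fun _ => rfl, Eq.symm, Eq.trans⟩, ?_, ?_, ?_⟩
      · intro x₁ y₁ x₂ y₂ h₁ h₂
        rw [inf_sup_right, inf_sup_right, h₁, h₂]
      · intro x₁ y₁ x₂ y₂ h₁ h₂
        rw [← inf_idem (a := e), inf_inf_inf_comm, inf_inf_inf_comm y₁, h₁, h₂]
      · intro x y h
        rw [← he, ← hinf, ← hinf, h]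
    have hcj : IsCongruence g (fun x y => x ⊔ e = y ⊔ e) := by
      refine ⟨⟨fun _ => rfl, Eq.symm, Eq.trans⟩, ?_, ?_, ?_⟩
      · intro x₁ y₁ x₂ y₂ h₁ h₂
        rw [← sup_idem (a := e), sup_sup_sup_comm, sup_sup_sup_comm y₁, h₁, h₂]
      · intro x₁ y₁ x₂ y₂ h₁ h₂
        rw [sup_inf_right, sup_inf_right, h₁, h₂]
      · intro x y h
        rw [← he, ← hsup, ← hsup, h]
    by_cases hwj : ∃ x y, (x ⊔ e = y ⊔ e) ∧ x ≠ y
    · by_cases hwm : ∃ x y, (x ⊓ e = y ⊓ e) ∧ x ≠ y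
      · obtain ⟨x, y, h₁, h₂, hne⟩ := fsi _ _ hcm hcj hwm hwj
        exact absurd (eq_of_inf_eq_sup_eq h₁ h₂) hne
      · push_neg at hwm
        right
        intro x
        have h3 : (x ⊓ e) ⊓ e = x ⊓ e := by rw [inf_assoc, inf_idem]
        have hx : x ⊓ e = x := hwm (x ⊓ e) x h3
        exact hx ▸ inf_le_right
    · push_neg at hwj
      left
      intro x
      have h3 : (x ⊔ e) ⊔ e = x ⊔ e := by rw [sup_assoc, sup_idem]
      have hx : x ⊔ e = x := hwj (x ⊔ e) x h3
      exact hx ▸ le_sup_right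
  -- orbit joins and meets
  have hne_range : (Finset.range n).Nonempty := Finset.nonempty_range_iff.mpr hn.ne'
  have hmod_mem : ∀ k : ℕ, k % n ∈ Finset.range n := fun k => Finset.mem_range.mpr (Nat.mod_lt _ hn)
  have hsucc_mod : ∀ i : ℕ, g^[(i + (n - 1)) % n + 1] = g^[i] := by
    intro i
    have h1 : (i + (n - 1)) % n + 1 ≡ i + (n - 1) + 1 [MOD n] := (Nat.mod_modEq _ n).add_right 1
    have h2 : i + (n - 1) + 1 = i + n := by omega
    have h3 : (i + n) ≡ i [MOD n] := by
      unfold Nat.ModEq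
      exact Nat.add_mod_right i n
    have h4 : ((i + (n - 1)) % n + 1) % n = i % n := (h1.trans (h2 ▸ h3))
    rw [hIter ((i + (n - 1)) % n + 1), h4, ← hIter i]
  have horbSup : ∀ x : L, g ((Finset.range n).sup' hne_range (fun i => g^[i] x)) =
      (Finset.range n).sup' hne_range (fun i => g^[i] x) := by
    intro x
    have h1 : g ((Finset.range n).sup' hne_range (fun i => g^[i] x)) =
        (Finset.range n).sup' hne_range (fun i => g^[i + 1] x) := by
      have := map_finset_sup' (SupHom.mk g hsup) hne_range (fun i => g^[i] x)
      simp only [SupHom.coe_mk] at this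
      rw [this]
      exact Finset.sup'_congr hne_range rfl (fun i _ => (Function.iterate_succ_apply' g i x).symm)
    rw [h1]
    apply le_antisymm
    · apply Finset.sup'_le
      intro i _
      rw [hIter (i + 1)]
      exact Finset.le_sup' (fun i => g^[i] x) (hmod_mem (i + 1))
    · apply Finset.sup'_le
      intro i _
      have : g^[(i + (n - 1)) % n + 1] x = g^[i] x := by rw [hsucc_mod i]
      rw [← this]
      exact Finset.le_sup' (fun j => g^[j + 1] x) (hmod_mem (i + (n - 1)))
  have horbInf : ∀ x : L, g ((Finset.range n).inf' hne_range (fun i => g^[i] x)) =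
      (Finset.range n).inf' hne_range (fun i => g^[i] x) := by
    intro x
    have h1 : g ((Finset.range n).inf' hne_range (fun i => g^[i] x)) =
        (Finset.range n).inf' hne_range (fun i => g^[i + 1] x) := by
      have := map_finset_inf' (InfHom.mk g hinf) hne_range (fun i => g^[i] x)
      simp only [InfHom.coe_mk] at this
      rw [this]
      exact Finset.inf'_congr hne_range rfl (fun i _ => (Function.iterate_succ_apply' g i x).symm)
    rw [h1]
    apply le_antisymm
    · apply Finset.le_inf'
      intro i _
      have : g^[(i + (n - 1)) % n + 1] x = g^[i] x := by rw [hsucc_mod i]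
      rw [← this]
      exact Finset.inf'_le (fun j => g^[j + 1] x) (hmod_mem (i + (n - 1)))
    · apply Finset.le_inf'
      intro i _
      rw [hIter (i + 1)]
      exact Finset.inf'_le (fun i => g^[i] x) (hmod_mem (i + 1))
  -- a top and a bottom element
  obtain ⟨a₀, b₀, hμab, hab_ne⟩ := hwit
  obtain ⟨top, hgtop, htople⟩ : ∃ t : L, g t = t ∧ ∀ x, x ≤ t := by
    refine ⟨_, horbSup (a₀ ⊔ b₀), ?_⟩
    have hab : a₀ ⊔ b₀ ≤ (Finset.range n).sup' hne_range (fun i => g^[i] (a₀ ⊔ b₀)) :=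
      Finset.le_sup' (fun i => g^[i] (a₀ ⊔ b₀)) (Finset.mem_range.mpr hn)
    rcases fixbt _ (horbSup (a₀ ⊔ b₀)) with h | h
    · exact absurd (le_antisymm (le_sup_left.trans (hab.trans (h b₀)))
        (le_sup_right.trans (hab.trans (h a₀)))) hab_ne
    · exact h
  obtain ⟨bot, hgbot, hbotle⟩ : ∃ t : L, g t = t ∧ ∀ x, t ≤ x := by
    refine ⟨_, horbInf (a₀ ⊓ b₀), ?_⟩
    have hab : (Finset.range n).inf' hne_range (fun i => g^[i] (a₀ ⊓ b₀)) ≤ a₀ ⊓ b₀ :=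
      Finset.inf'_le (fun i => g^[i] (a₀ ⊓ b₀)) (Finset.mem_range.mpr hn)
    rcases fixbt _ (horbInf (a₀ ⊓ b₀)) with h | h
    · exact h
    · exact absurd (le_antisymm ((h a₀).trans (hab.trans inf_le_right))
        ((h b₀).trans (hab.trans inf_le_left))) hab_ne
  letI : Top L := ⟨top⟩
  letI : Bot L := ⟨bot⟩
  letI : OrderTop L := ⟨htople⟩
  letI : OrderBot L := ⟨hbotle⟩
  letI : BoundedOrder L := ⟨⟩
  -- prime filter separation
  have hprime : ∀ a b : L, ¬ a ≤ b → ∃ F : Set L,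
      a ∈ F ∧ b ∉ F ∧ (∀ x y : L, x ∈ F → x ≤ y → y ∈ F) ∧
      (∀ x y : L, x ∈ F → y ∈ F → x ⊓ y ∈ F) ∧ (∀ x y : L, x ⊔ y ∈ F → x ∈ F ∨ y ∈ F) := by
    intro a b hab
    have hdisj : Disjoint (↑(Order.PFilter.principal a) : Set L)
        (↑(Order.Ideal.principal b) : Set L) := by
      rw [Set.disjoint_left]
      intro x hx hx'
      exact hab (le_trans (Order.PFilter.mem_principal.mp hx) (Order.Ideal.mem_principal.mp hx'))
    obtain ⟨J, hJp, hIJ, hJF⟩ := DistribLattice.prime_ideal_of_disjoint_filter_ideal hdisj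
    refine ⟨(↑J : Set L)ᶜ, ?_, ?_, ?_, ?_, ?_⟩
    · exact Set.disjoint_left.mp hJF (Order.PFilter.mem_principal.mpr le_rfl)
    · intro hb
      exact hb (hIJ Order.Ideal.mem_principal_self)
    · intro x y hx hxy hy
      exact hx (J.lower hxy hy)
    · intro x y hx hy hxy
      rcases hJp.mem_or_mem hxy with h | h
      · exact hx h
      · exact hy h
    · intro x y hxy
      by_contra h
      push_neg at h
      simp only [Set.mem_compl_iff, not_not] at h
      exact hxy (Order.Ideal.sup_mem h.1 h.2)
  -- a prime filter separating the monolith pair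
  have hor : ¬ a₀ ≤ b₀ ∨ ¬ b₀ ≤ a₀ := by
    by_contra h; push_neg at h; exact hab_ne (le_antisymm h.1 h.2)
  obtain ⟨F, hFne_ab, hFup, hFinf, hFsup⟩ : ∃ F : Set L, ¬(a₀ ∈ F ↔ b₀ ∈ F) ∧
      (∀ x y : L, x ∈ F → x ≤ y → y ∈ F) ∧
      (∀ x y : L, x ∈ F → y ∈ F → x ⊓ y ∈ F) ∧ (∀ x y : L, x ⊔ y ∈ F → x ∈ F ∨ y ∈ F) := by
    rcases hor with h | h
    · obtain ⟨F, h1, h2, h3, h4, h5⟩ := hprime a₀ b₀ h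
      exact ⟨F, fun hiff => h2 (hiff.mp h1), h3, h4, h5⟩
    · obtain ⟨F, h1, h2, h3, h4, h5⟩ := hprime b₀ a₀ h
      exact ⟨F, fun hiff => h2 (hiff.mpr h1), h3, h4, h5⟩
  have hmemsup : ∀ x y : L, x ⊔ y ∈ F ↔ x ∈ F ∨ y ∈ F :=
    fun x y => ⟨hFsup x y, fun h => h.elim (fun h => hFup x _ h le_sup_left)
      (fun h => hFup y _ h le_sup_right)⟩
  have hmeminf : ∀ x y : L, x ⊓ y ∈ F ↔ x ∈ F ∧ y ∈ F :=
    fun x y => ⟨fun h => ⟨hFup _ x h inf_le_left, hFup _ y h inf_le_right⟩,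
      fun h => hFinf x y h.1 h.2⟩
  have hFex : ∃ z, z ∈ F := by
    by_cases ha : a₀ ∈ F
    · exact ⟨a₀, ha⟩
    · by_cases hb : b₀ ∈ F
      · exact ⟨b₀, hb⟩
      · exact absurd ⟨fun h => absurd h ha, fun h => absurd h hb⟩ hFne_ab
  have hFnex : ∃ z, z ∉ F := by
    by_cases ha : a₀ ∈ F
    · by_cases hb : b₀ ∈ F
      · exact absurd ⟨fun _ => hb, fun _ => ha⟩ hFne_ab
      · exact ⟨b₀, hb⟩
    · exact ⟨a₀, ha⟩
  have htopF : top ∈ F := by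
    obtain ⟨z, hz⟩ := hFex
    exact hFup z top hz (htople z)
  have hbotF : bot ∉ F := by
    obtain ⟨z, hz⟩ := hFnex
    exact fun h => hz (hFup bot z h (hbotle z))
  -- the congruence associated with F is trivial
  have hFsep : ∀ x y : L, (∀ i : ℕ, (g^[i] x ∈ F ↔ g^[i] y ∈ F)) → x = y := by
    intro x y hxy
    by_contra hne
    have hcong : IsCongruence g (fun x y => ∀ i : ℕ, (g^[i] x ∈ F ↔ g^[i] y ∈ F)) := by
      refine ⟨⟨fun _ _ => Iff.rfl, fun h i => (h i).symm, fun h h' i => (h i).trans (h' i)⟩,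
        ?_, ?_, ?_⟩
      · intro x₁ y₁ x₂ y₂ h₁ h₂ i
        rw [hsupIt, hsupIt, hmemsup, hmemsup, h₁ i, h₂ i]
      · intro x₁ y₁ x₂ y₂ h₁ h₂ i
        rw [hinfIt, hinfIt, hmeminf, hmeminf, h₁ i, h₂ i]
      · intro x y h i
        have := h (i + 1)
        rwa [Function.iterate_succ_apply, Function.iterate_succ_apply] at this
    have hμle := hμmin _ hcong (fun h => hne ((congrFun (congrFun h x) y).mp hxy)) a₀ b₀ hμab
    have := hμle 0
    simp only [Function.iterate_zero, id] at this
    exact hFne_ab this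
  -- the embedding into the rotational cube
  have hvalcast : ∀ c : ZMod n, ((c.val : ℕ) : ZMod n) = c := fun c => ZMod.natCast_rightInverse c
  let f : L → Set (ZMod n) := fun x => {i : ZMod n | g^[(-i).val] x ∈ F}
  have hfmem : ∀ (x : L) (j : ZMod n), j ∈ f x ↔ g^[(-j).val] x ∈ F := fun x j => Iff.rfl
  have hfsup : ∀ x y : L, f (x ⊔ y) = f x ∪ f y := by
    intro x y
    ext j
    simp only [hfmem, Set.mem_union, hsupIt, hmemsup]
  have hfinf : ∀ x y : L, f (x ⊓ y) = f x ∩ f y := by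
    intro x y
    ext j
    simp only [hfmem, Set.mem_inter_iff, hinfIt, hmeminf]
  let rot : ZMod n → Set (ZMod n) → Set (ZMod n) := fun c T => (· + c) '' T
  have hrotmem : ∀ (c : ZMod n) (T : Set (ZMod n)) (j : ZMod n), j ∈ rot c T ↔ j - c ∈ T := by
    intro c T j
    constructor
    · rintro ⟨k, hk, rfl⟩
      simpa using hk
    · intro h
      exact ⟨j - c, h, by ring⟩
  have hshift : ∀ (c : ZMod n) (x : L), g^[(c + 1).val] x = g^[c.val] (g x) := by
    intro c x
    rw [← Function.iterate_succ_apply]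
    refine congrFun (hcongr _ _ ?_) x
    rw [hvalcast]
    push_cast
    rw [hvalcast]
  have hfg : ∀ x : L, f (g x) = rot 1 (f x) := by
    intro x
    ext j
    rw [hrotmem]
    simp only [hfmem]
    rw [← hshift (-j) x]
    have he : -j + 1 = -(j - 1) := by ring
    rw [he]
  have hrot_rot : ∀ (c d : ZMod n) (T : Set (ZMod n)), rot c (rot d T) = rot (d + c) T := by
    intro c d T
    simp only [rot, Set.image_image, add_assoc]
  have hrot_zero : ∀ T : Set (ZMod n), rot 0 T = T := by
    intro T
    simp only [rot, add_zero, Set.image_id']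
  have hfit : ∀ (k : ℕ) (x : L), f (g^[k] x) = rot (k : ZMod n) (f x) := by
    intro k
    induction k with
    | zero => intro x; simp only [Function.iterate_zero, id, Nat.cast_zero, hrot_zero]
    | succ k ih =>
      intro x
      rw [Function.iterate_succ_apply, ih, hfg, hrot_rot]
      congr 1
      push_cast
      ring
  have hgit_bot : ∀ k : ℕ, g^[k] bot = bot := by
    intro k
    induction k with
    | zero => rfl
    | succ k ih => rw [Function.iterate_succ_apply', ih, hgbot]
  have hgit_top : ∀ k : ℕ, g^[k] top = top := by
    intro k
    induction k with
    | zero => rfl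
    | succ k ih => rw [Function.iterate_succ_apply', ih, hgtop]
  have hfbot : f bot = ∅ := by
    ext j
    simp only [hfmem, hgit_bot, Set.mem_empty_iff_false, iff_false]
    exact hbotF
  have hftop : f top = Set.univ := by
    ext j
    simp only [hfmem, hgit_top, Set.mem_univ, iff_true]
    exact htopF
  have hfinj : Function.Injective f := by
    intro x y hxy
    apply hFsep
    intro i
    have he : g^[((i : ZMod n)).val] = g^[i] := hcongr _ _ (hvalcast _)
    have h2 := Set.ext_iff.mp hxy (-(i : ZMod n))
    simp only [hfmem, neg_neg, he] at h2
    exact h2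
  -- the image subalgebra S
  let S : Set (Set (ZMod n)) := Set.range f
  have hSsup : ∀ a b : Set (ZMod n), a ∈ S → b ∈ S → a ∪ b ∈ S := by
    rintro a b ⟨x, rfl⟩ ⟨y, rfl⟩
    exact ⟨x ⊔ y, hfsup x y⟩
  have hSinf : ∀ a b : Set (ZMod n), a ∈ S → b ∈ S → a ∩ b ∈ S := by
    rintro a b ⟨x, rfl⟩ ⟨y, rfl⟩
    exact ⟨x ⊓ y, hfinf x y⟩
  have hSrot : ∀ (c : ZMod n) (a : Set (ZMod n)), a ∈ S → rot c a ∈ S := by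
    rintro c a ⟨x, rfl⟩
    exact ⟨g^[c.val] x, by rw [hfit, hvalcast]⟩
  have hSbot : (∅ : Set (ZMod n)) ∈ S := ⟨bot, hfbot⟩
  have hSuniv : (Set.univ : Set (ZMod n)) ∈ S := ⟨top, hftop⟩
  -- closure under finite (i.e. all) unions of families
  have hSsUnion : ∀ T : Set (Set (ZMod n)), T ⊆ S → ⋃₀ T ∈ S := by
    intro T
    refine Set.Finite.induction_on (motive := fun T _ => T ⊆ S → ⋃₀ T ∈ S) T (Set.toFinite T) ?_ ?_
    · intro _
      simpa using hSbot
    · intro a T' _ _ ih hsub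
      rw [Set.sUnion_insert]
      exact hSsup _ _ (hsub (Set.mem_insert a T'))
        (ih (fun t ht => hsub (Set.mem_insert_of_mem a ht)))
  -- join-irreducible elements of S
  let JI : Set (ZMod n) → Prop := fun p => p ∈ S ∧ p ≠ ∅ ∧
    ∀ a b : Set (ZMod n), a ∈ S → b ∈ S → p = a ∪ b → p = a ∨ p = b
  have hJIprime : ∀ p a b : Set (ZMod n), JI p → a ∈ S → b ∈ S → p ⊆ a ∪ b →
      p ⊆ a ∨ p ⊆ b := by
    intro p a b hp ha hb hsub
    have hdecomp : p = (p ∩ a) ∪ (p ∩ b) := by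
      rw [← Set.inter_union_distrib_left]
      exact (Set.inter_eq_left.mpr hsub).symm
    rcases hp.2.2 _ _ (hSinf _ _ hp.1 ha) (hSinf _ _ hp.1 hb) hdecomp with h | h
    · left; rw [h]; exact Set.inter_subset_right
    · right; rw [h]; exact Set.inter_subset_right
  have hJIsUnion : ∀ (p : Set (ZMod n)) (T : Set (Set (ZMod n))), JI p → T ⊆ S →
      p ⊆ ⋃₀ T → ∃ t ∈ T, p ⊆ t := by
    intro p T hp
    refine Set.Finite.induction_on
      (motive := fun T _ => T ⊆ S → p ⊆ ⋃₀ T → ∃ t ∈ T, p ⊆ t) T (Set.toFinite T) ?_ ?_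
    · intro _ hsub
      rw [Set.sUnion_empty] at hsub
      exact absurd (Set.subset_empty_iff.mp hsub) hp.2.1
    · intro a T' _ _ ih hsub hsubU
      rw [Set.sUnion_insert] at hsubU
      rcases hJIprime p a _ hp (hsub (Set.mem_insert a T'))
        (hSsUnion T' (fun t ht => hsub (Set.mem_insert_of_mem a ht))) hsubU with h | h
      · exact ⟨a, Set.mem_insert a T', h⟩
      · obtain ⟨t, ht, hsubt⟩ := ih (fun t ht => hsub (Set.mem_insert_of_mem a ht)) h
        exact ⟨t, Set.mem_insert_of_mem a ht, hsubt⟩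
  -- every element of S is the union of the join-irreducibles below it
  let Jb : Set (ZMod n) → Set (Set (ZMod n)) := fun x => {p | JI p ∧ p ⊆ x}
  have hJbS : ∀ x : Set (ZMod n), Jb x ⊆ S := fun x p hp => hp.1.1
  have hdecAux : ∀ (k : ℕ) (x : Set (ZMod n)), x ∈ S → x.ncard ≤ k → ⋃₀ (Jb x) = x := by
    intro k
    induction k with
    | zero =>
      intro x _ hcard
      have hx0 : x = ∅ := (Set.ncard_eq_zero (Set.toFinite x)).mp (Nat.le_zero.mp hcard)
      subst hx0
      exact Set.subset_empty_iff.mp (Set.sUnion_subset (fun p hp => hp.2))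
    | succ k ih =>
      intro x hx hcard
      refine Set.Subset.antisymm (Set.sUnion_subset (fun p hp => hp.2)) ?_
      by_cases hxe : x = ∅
      · subst hxe; exact Set.empty_subset _
      by_cases hJx : JI x
      · exact Set.subset_sUnion_of_mem ⟨hJx, Set.Subset.rfl⟩
      · have hsplit : ∃ a b : Set (ZMod n), a ∈ S ∧ b ∈ S ∧ x = a ∪ b ∧ x ≠ a ∧ x ≠ b := by
          by_contra hcon
          push_neg at hcon
          refine hJx ⟨hx, hxe, ?_⟩
          intro a b ha hb hab
          by_cases hxa : x = a
          · exact Or.inl hxa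
          · exact Or.inr (hcon a b ha hb hab hxa)
        obtain ⟨a, b, ha, hb, hab, hxa, hxb⟩ := hsplit
        have hax : a ⊆ x := hab ▸ Set.subset_union_left
        have hbx : b ⊆ x := hab ▸ Set.subset_union_right
        have hacard : a.ncard ≤ k := by
          have := Set.ncard_lt_ncard (ssubset_of_subset_of_ne hax (fun h => hxa h.symm))
            (Set.toFinite x)
          omega
        have hbcard : b.ncard ≤ k := by
          have := Set.ncard_lt_ncard (ssubset_of_subset_of_ne hbx (fun h => hxb h.symm))
            (Set.toFinite x)
          omega
        have hJba : Jb a ⊆ Jb x := fun p hp => ⟨hp.1, hp.2.trans hax⟩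
        have hJbb : Jb b ⊆ Jb x := fun p hp => ⟨hp.1, hp.2.trans hbx⟩
        calc x = a ∪ b := hab
        _ ⊆ ⋃₀ (Jb x) ∪ ⋃₀ (Jb x) := Set.union_subset_union
            (by rw [← ih a ha hacard]; exact Set.sUnion_subset_sUnion hJba)
            (by rw [← ih b hb hbcard]; exact Set.sUnion_subset_sUnion hJbb)
        _ = ⋃₀ (Jb x) := Set.union_self _
  have hdec : ∀ x : Set (ZMod n), x ∈ S → ⋃₀ (Jb x) = x :=
    fun x hx => hdecAux x.ncard x hx le_rfl
  -- an atom of S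
  have hUnivne : (Set.univ : Set (ZMod n)) ≠ ∅ := by
    simp only [ne_eq, Set.univ_eq_empty_iff, not_isEmpty_iff]
    infer_instance
  have hKne : {k : ℕ | ∃ p : Set (ZMod n), p ∈ S ∧ p ≠ ∅ ∧ p.ncard = k}.Nonempty :=
    ⟨(Set.univ : Set (ZMod n)).ncard, Set.univ, hSuniv, hUnivne, rfl⟩
  obtain ⟨A, hAS, hAne, hAcard⟩ := Nat.sInf_mem hKne
  have hAmin : ∀ q : Set (ZMod n), q ∈ S → q ≠ ∅ → q ⊆ A → q = A := by
    intro q hqS hqne hqA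
    by_contra hne
    have hlt : q.ncard < A.ncard :=
      Set.ncard_lt_ncard (ssubset_of_subset_of_ne hqA hne) (Set.toFinite A)
    have hqK : q.ncard ∈ {k : ℕ | ∃ p : Set (ZMod n), p ∈ S ∧ p ≠ ∅ ∧ p.ncard = k} :=
      ⟨q, hqS, hqne, rfl⟩
    have := Nat.sInf_le hqK
    omega
  have hAJI : JI A := by
    refine ⟨hAS, hAne, ?_⟩
    intro a b ha hb hab
    by_cases hae : a = ∅
    · right
      rw [hab, hae, Set.empty_union]
    · left
      exact (hAmin a ha hae (hab ▸ Set.subset_union_left)).symm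
  -- rotation facts
  have hrot_mono : ∀ (c : ZMod n) {a b : Set (ZMod n)}, a ⊆ b → rot c a ⊆ rot c b :=
    fun c _ _ h => Set.image_mono h
  have hrot_cancel : ∀ (c : ZMod n) (T : Set (ZMod n)), rot (-c) (rot c T) = T := by
    intro c T
    rw [hrot_rot, add_neg_cancel, hrot_zero]
  have hrot_cancel' : ∀ (c : ZMod n) (T : Set (ZMod n)), rot c (rot (-c) T) = T := by
    intro c T
    rw [hrot_rot, neg_add_cancel, hrot_zero]
  have hrotinj : ∀ c : ZMod n, Function.Injective (rot c) := by
    intro c T T' h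
    have := congrArg (rot (-c)) h
    rwa [hrot_cancel, hrot_cancel] at this
  have hJIrot : ∀ (c : ZMod n) (p : Set (ZMod n)), JI p → JI (rot c p) := by
    intro c p hp
    refine ⟨hSrot c p hp.1, ?_, ?_⟩
    · obtain ⟨j, hj⟩ := Set.nonempty_iff_ne_empty.mpr hp.2.1
      exact Set.nonempty_iff_ne_empty.mp ⟨j + c, ⟨j, hj, rfl⟩⟩
    · intro a b ha hb hab
      have h1 : p = rot (-c) a ∪ rot (-c) b := by
        have h2 : rot (-c) a ∪ rot (-c) b = rot (-c) (a ∪ b) := (Set.image_union _ a b).symm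
        rw [h2, ← hab, hrot_cancel]
      rcases hp.2.2 _ _ (hSrot _ _ ha) (hSrot _ _ hb) h1 with h | h
      · left
        rw [h, hrot_cancel']
      · right
        rw [h, hrot_cancel']
  have hJb_union : ∀ a b : Set (ZMod n), a ∈ S → b ∈ S → Jb (a ∪ b) = Jb a ∪ Jb b := by
    intro a b ha hb
    apply Set.Subset.antisymm
    · intro r hr
      rcases hJIprime r a b hr.1 ha hb hr.2 with h | h
      · exact Or.inl ⟨hr.1, h⟩
      · exact Or.inr ⟨hr.1, h⟩
    · rintro r (hr | hr)
      · exact ⟨hr.1, hr.2.trans Set.subset_union_left⟩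
      · exact ⟨hr.1, hr.2.trans Set.subset_union_right⟩
  have hJb_inter : ∀ a b : Set (ZMod n), Jb (a ∩ b) = Jb a ∩ Jb b := by
    intro a b
    apply Set.Subset.antisymm
    · intro r hr
      exact ⟨⟨hr.1, hr.2.trans Set.inter_subset_left⟩, ⟨hr.1, hr.2.trans Set.inter_subset_right⟩⟩
    · rintro r ⟨hr1, hr2⟩
      exact ⟨hr1.1, Set.subset_inter hr1.2 hr2.2⟩
  have hJb_rot : ∀ (c : ZMod n) (z : Set (ZMod n)), Jb (rot c z) = rot c '' (Jb z) := by
    intro c z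
    apply Set.Subset.antisymm
    · rintro r ⟨hrJI, hrsub⟩
      refine ⟨rot (-c) r, ⟨hJIrot (-c) r hrJI, ?_⟩, hrot_cancel' c r⟩
      have := hrot_mono (-c) hrsub
      rwa [hrot_cancel] at this
    · rintro r ⟨q, ⟨hqJI, hqsub⟩, rfl⟩
      exact ⟨hJIrot c q hqJI, hrot_mono c hqsub⟩
  -- the orbit of a join-irreducible
  let Q : Set (ZMod n) → Set (Set (ZMod n)) := fun p => {r | ∃ c : ZMod n, r = rot c p}
  have hQinv : ∀ p : Set (ZMod n), rot 1 '' (Q p) = Q p := by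
    intro p
    apply Set.Subset.antisymm
    · rintro r ⟨s, ⟨c, rfl⟩, rfl⟩
      exact ⟨c + 1, hrot_rot 1 c p⟩
    · rintro r ⟨c, rfl⟩
      exact ⟨rot (c - 1) p, ⟨c - 1, rfl⟩, by rw [hrot_rot, sub_add_cancel]⟩
  have hcongQ : ∀ p : Set (ZMod n),
      IsCongruence g (fun x y => Jb (f x) \ Q p = Jb (f y) \ Q p) := by
    intro p
    refine ⟨⟨fun _ => rfl, Eq.symm, Eq.trans⟩, ?_, ?_, ?_⟩
    · intro x₁ y₁ x₂ y₂ h₁ h₂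
      rw [hfsup, hfsup, hJb_union _ _ ⟨x₁, rfl⟩ ⟨x₂, rfl⟩, hJb_union _ _ ⟨y₁, rfl⟩ ⟨y₂, rfl⟩,
        Set.union_diff_distrib, Set.union_diff_distrib, h₁, h₂]
    · intro x₁ y₁ x₂ y₂ h₁ h₂
      have hgen : ∀ U V W : Set (Set (ZMod n)), (U ∩ V) \ W = (U \ W) ∩ (V \ W) := by
        intro U V W
        ext r
        simp only [Set.mem_diff, Set.mem_inter_iff]
        tauto
      rw [hfinf, hfinf, hJb_inter, hJb_inter, hgen, hgen, h₁, h₂]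
    · intro x y h
      rw [hfg, hfg, hJb_rot, hJb_rot, ← hQinv p, ← Set.image_diff (hrotinj 1),
        ← Set.image_diff (hrotinj 1), h]
  have hwitQ : ∀ p : Set (ZMod n), JI p →
      ∃ x y : L, (Jb (f x) \ Q p = Jb (f y) \ Q p) ∧ x ≠ y := by
    intro p hp
    obtain ⟨xp, hxp⟩ := hp.1
    have hTp : (Jb p \ {p} : Set (Set (ZMod n))) ⊆ S := fun t ht => ht.1.1.1
    obtain ⟨yp, hyp⟩ := hSsUnion _ hTp
    have hy_sub : ⋃₀ (Jb p \ {p}) ⊆ p := Set.sUnion_subset (fun t ht => ht.1.2)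
    have hpnotin : ¬ p ⊆ ⋃₀ (Jb p \ {p}) := by
      intro hcon
      obtain ⟨t, ht, hsubt⟩ := hJIsUnion p _ hp hTp hcon
      exact ht.2 (Set.Subset.antisymm ht.1.2 hsubt)
    have hJy : Jb (⋃₀ (Jb p \ {p})) = Jb p \ {p} := by
      apply Set.Subset.antisymm
      · intro r hr
        refine ⟨⟨hr.1, hr.2.trans hy_sub⟩, ?_⟩
        intro hre
        rw [Set.mem_singleton_iff] at hre
        subst hre
        exact hpnotin hr.2
      · intro r hr
        exact ⟨hr.1.1, Set.subset_sUnion_of_mem hr⟩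
    refine ⟨xp, yp, ?_, ?_⟩
    · rw [hxp, hyp, hJy]
      ext r
      simp only [Set.mem_diff, Set.mem_singleton_iff]
      constructor
      · rintro ⟨hr, hrQ⟩
        exact ⟨⟨hr, fun he => hrQ ⟨0, by rw [he, hrot_zero]⟩⟩, hrQ⟩
      · rintro ⟨⟨hr, _⟩, hrQ⟩
        exact ⟨hr, hrQ⟩
    · intro he
      rw [he, hyp] at hxp
      have hpe : p = ⋃₀ (Jb p \ {p}) := hxp.symm
      exact hpnotin hpe.subset
  -- all join-irreducibles lie in a single orbit
  have horb : ∀ p q : Set (ZMod n), JI p → JI q → ∃ c : ZMod n, rot c p = q := by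
    intro p q hp hq
    by_contra hcon
    push_neg at hcon
    have hdisj : ∀ r : Set (ZMod n), r ∈ Q p → r ∈ Q q → False := by
      rintro r ⟨c, rfl⟩ ⟨d, hd⟩
      have h1 : rot (-d) (rot c p) = q := by rw [hd, hrot_cancel]
      rw [hrot_rot] at h1
      exact hcon (c + -d) h1
    obtain ⟨x, y, h1, h2, hne⟩ := fsi _ _ (hcongQ p) (hcongQ q) (hwitQ p hp) (hwitQ q hq)
    apply hne
    apply hfinj
    have hJbeq : Jb (f x) = Jb (f y) := by
      ext r
      by_cases hrQ : r ∈ Q p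
      · have hrQ' : r ∉ Q q := fun h => hdisj r hrQ h
        constructor
        · intro hr
          exact (Set.ext_iff.mp h2 r).mp ⟨hr, hrQ'⟩ |>.1
        · intro hr
          exact (Set.ext_iff.mp h2 r).mpr ⟨hr, hrQ'⟩ |>.1
      · constructor
        · intro hr
          exact (Set.ext_iff.mp h1 r).mp ⟨hr, hrQ⟩ |>.1
        · intro hr
          exact (Set.ext_iff.mp h1 r).mpr ⟨hr, hrQ⟩ |>.1
    rw [← hdec (f x) ⟨x, rfl⟩, ← hdec (f y) ⟨y, rfl⟩, hJbeq]
  -- the stabilizer of A is trivial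
  have hstab : ∀ c : ZMod n, rot c A = A → c = 0 := by
    intro c hc
    have hfixJI : ∀ r : Set (ZMod n), JI r → rot c r = r := by
      intro r hr
      obtain ⟨d, hd⟩ := horb A r hAJI hr
      rw [← hd, hrot_rot, add_comm, ← hrot_rot, hc]
    have hfixS : ∀ z : Set (ZMod n), z ∈ S → rot c z = z := by
      intro z hz
      rw [← hdec z hz]
      apply Set.Subset.antisymm
      · rintro j ⟨k, hk, rfl⟩
        obtain ⟨t, ht, hkt⟩ := hk
        refine ⟨t, ht, ?_⟩
        rw [← hfixJI t ht.1]
        exact ⟨k, hkt, rfl⟩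
      · rintro j ⟨t, ht, hjt⟩
        have h2 : j ∈ rot c t := by
          rw [hfixJI t ht.1]
          exact hjt
        obtain ⟨k, hk, rfl⟩ := h2
        exact ⟨k, ⟨t, ht, hk⟩, rfl⟩
    have hgc : g^[c.val] = id := by
      funext x
      apply hfinj
      rw [hfit, hvalcast, hfixS (f x) ⟨x, rfl⟩]
      rfl
    by_contra hc0
    have hc0' : c.val ≠ 0 := fun h => hc0 ((ZMod.val_eq_zero c).mp h)
    exact hmin c.val (Nat.pos_of_ne_zero hc0') (ZMod.val_lt c) hgc
  -- A is a singleton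
  obtain ⟨j₀, hj₀⟩ := Set.nonempty_iff_ne_empty.mpr hAne
  have hAsing : A = {j₀} := by
    apply Set.Subset.antisymm
    · intro j₁ hj₁
      have hsub : A ⊆ rot (j₁ - j₀) A := by
        have hmem : j₁ ∈ A ∩ rot (j₁ - j₀) A := ⟨hj₁, ⟨j₀, hj₀, by ring⟩⟩
        have hne' : A ∩ rot (j₁ - j₀) A ≠ ∅ := Set.nonempty_iff_ne_empty.mp ⟨j₁, hmem⟩
        have heq := hAmin _ (hSinf _ _ hAS (hSrot _ _ hAS)) hne' Set.inter_subset_left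
        conv_lhs => rw [← heq]
        exact Set.inter_subset_right
      have hchain : ∀ k : ℕ,
          rot ((k : ZMod n) * (j₁ - j₀)) A ⊆ rot (((k + 1 : ℕ) : ZMod n) * (j₁ - j₀)) A := by
        intro k
        have h3 := hrot_mono ((k : ZMod n) * (j₁ - j₀)) hsub
        rw [hrot_rot] at h3
        have hco : (((k + 1 : ℕ) : ZMod n)) * (j₁ - j₀) =
            (j₁ - j₀) + ((k : ZMod n)) * (j₁ - j₀) := by
          push_cast
          ring
        rw [hco]
        exact h3
      have hup : ∀ k : ℕ, rot (j₁ - j₀) A ⊆ rot (((1 + k : ℕ) : ZMod n) * (j₁ - j₀)) A := by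
        intro k
        induction k with
        | zero =>
          rw [Nat.cast_one, one_mul]
        | succ k ih => exact ih.trans (hchain (1 + k))
      have hfull : rot (j₁ - j₀) A ⊆ A := by
        have h4 := hup (n - 1)
        rw [show ((1 + (n - 1) : ℕ) : ZMod n) = 0 by
          rw [show 1 + (n - 1) = n by omega]
          exact ZMod.natCast_self n, zero_mul, hrot_zero] at h4
        exact h4
      have hceq := hstab (j₁ - j₀) (Set.Subset.antisymm hfull hsub)
      have : j₁ = j₀ := by
        have h5 := sub_eq_zero.mp hceq
        exact h5
      exact this ▸ rfl
    · intro j hj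
      rw [Set.mem_singleton_iff] at hj
      subst hj
      exact hj₀
  -- all singletons lie in S, hence S is everything
  have hsing : ∀ j : ZMod n, ({j} : Set (ZMod n)) ∈ S := by
    intro j
    have h6 := hSrot (j - j₀) A hAS
    rw [hAsing] at h6
    have h2 : rot (j - j₀) ({j₀} : Set (ZMod n)) = {j} := by
      simp only [rot, Set.image_singleton]
      congr 1
      ring
    rwa [h2] at h6
  have hfsurj : Function.Surjective f := by
    intro T
    have hT : T = ⋃₀ ((fun j => ({j} : Set (ZMod n))) '' T) := by
      ext t
      simp
    have hTsub : ((fun j => ({j} : Set (ZMod n))) '' T) ⊆ S := by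
      rintro s ⟨j, _, rfl⟩
      exact hsing j
    obtain ⟨x, hx⟩ := hSsUnion _ hTsub
    exact ⟨x, by rw [hx, ← hT]⟩
  refine ⟨⟨f, ⟨hfinj, hfsurj⟩, fun x y => ⟨hfsup x y, hfinf x y⟩, hfg⟩, ?_⟩
  -- simplicity
  intro r hrc
  by_cases hr : ∀ x y, r x y → x = y
  · left
    exact fun x y => ⟨hr x y, fun e => e ▸ hrc.1.refl x⟩
  · right
    push_neg at hr
    obtain ⟨u, v, huv, hune⟩ := hr
    have h1 : r (u ⊓ v) v := by
      have := hrc.2.2.1 u v v v huv (hrc.1.refl v)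
      rwa [inf_idem] at this
    have h2 : r u (u ⊔ v) := by
      have := hrc.2.1 u u u v (hrc.1.refl u) huv
      rwa [sup_idem] at this
    have hrcd : r (u ⊓ v) (u ⊔ v) :=
      hrc.1.trans (hrc.1.trans h1 (hrc.1.symm huv)) h2
    have hcdne : u ⊓ v ≠ u ⊔ v := by
      intro h
      exact hune (le_antisymm ((le_sup_left.trans_eq h.symm).trans inf_le_right)
        ((le_sup_right.trans_eq h.symm).trans inf_le_left))
    have hsub : f (u ⊓ v) ⊆ f (u ⊔ v) := by
      rw [hfinf, hfsup]
      exact Set.inter_subset_left.trans Set.subset_union_left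
    have hneq : f (u ⊓ v) ≠ f (u ⊔ v) := fun h => hcdne (hfinj h)
    obtain ⟨j, hjin, hjout⟩ := Set.exists_of_ssubset (ssubset_of_subset_of_ne hsub hneq)
    obtain ⟨sj, hsj⟩ := hfsurj {j}
    have hrbot : r bot sj := by
      have h7 := hrc.2.2.1 _ _ _ _ hrcd (hrc.1.refl sj)
      have h8 : (u ⊓ v) ⊓ sj = bot := by
        apply hfinj
        rw [hfinf, hsj, hfbot]
        exact Set.inter_singleton_eq_empty.mpr hjout
      have h9 : (u ⊔ v) ⊓ sj = sj := by
        apply hfinj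
        rw [hfinf, hsj]
        exact Set.inter_eq_right.mpr (Set.singleton_subset_iff.mpr hjin)
      rwa [h8, h9] at h7
    have hrit : ∀ k : ℕ, r bot (g^[k] sj) := by
      intro k
      induction k with
      | zero => exact hrbot
      | succ k ih =>
        have h10 := hrc.2.2.2 _ _ ih
        rw [hgbot] at h10
        rw [Function.iterate_succ_apply']
        exact h10
    have hrsing : ∀ t : L, (∃ k : ZMod n, f t = {k}) → r bot t := by
      rintro t ⟨k, hk⟩
      have h11 : f (g^[(k - j).val] sj) = {k} := by
        rw [hfit, hvalcast, hsj]
        simp only [rot, Set.image_singleton]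
        congr 1
        ring
      have h12 : t = g^[(k - j).val] sj := hfinj (by rw [hk, h11])
      rw [h12]
      exact hrit _
    have hbuild : ∀ T : Finset (ZMod n), ∃ z : L, f z = (↑T : Set (ZMod n)) ∧ r bot z := by
      intro T
      induction T using Finset.induction_on with
      | empty =>
        refine ⟨bot, by rw [hfbot]; simp, hrc.1.refl bot⟩
      | @insert a T' ha ih =>
        obtain ⟨z, hz, hrz⟩ := ih
        obtain ⟨ta, hta⟩ := hfsurj {a}
        refine ⟨ta ⊔ z, ?_, ?_⟩
        · rw [hfsup, hta, hz, Finset.coe_insert, Set.singleton_union]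
        · have h13 := hrc.2.1 _ _ _ _ (hrsing ta ⟨a, hta⟩) hrz
          rwa [sup_idem] at h13
    obtain ⟨z, hz, hrz⟩ := hbuild Finset.univ
    have hztop : z = top := hfinj (by rw [hz, hftop]; simp)
    have hrtop : r bot top := hztop ▸ hrz
    have hall : ∀ x, r x top := by
      intro x
      have h14 := hrc.2.1 x x bot top (hrc.1.refl x) hrtop
      rwa [sup_eq_left.mpr (hbotle x), sup_eq_right.mpr (htople x)] at h14
    intro x y
    exact hrc.1.trans (hall x) (hrc.1.symm (hall y))
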